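/- Blichfeldt's gauge inequality: if points c₁, …, c_k in R^n are pairwise at distance at least 2, then for every x ∈ R^n, Σᵢ max(0, 2 − |x − cᵢ|²)/2 ≤ 1. -/
import Mathlib

open Finset RealInnerProductSpace

theorem blichfeldt_gauge_inequality (n k : ℕ)
    (c : Fin k → EuclideanSpace ℝ (Fin n))
    (hsep : ∀ i j, i ≠ j → 2 ≤ dist (c i) (c j))
    (x : EuclideanSpace ℝ (Fin n)) :
    ∑ i, max 0 (2 - dist x (c i) ^ 2) / 2 ≤ 1 := by
  classical
  set S : Finset (Fin k) := Finset.univ.filter (fun i => dist x (c i) ^ 2 < 2) with hS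
  set a : Fin k → EuclideanSpace ℝ (Fin n) := fun i => c i - x with ha
  have hdist : ∀ i, dist x (c i) = ‖a i‖ := fun i => by
    rw [dist_eq_norm, ← norm_neg]; simp [ha]
  have hsum : ∑ i, max 0 (2 - dist x (c i) ^ 2) / 2
      = ∑ i ∈ S, (2 - ‖a i‖ ^ 2) / 2 := by
    rw [Finset.sum_filter]
    apply Finset.sum_congr rfl
    intro i _
    rcases lt_or_ge (dist x (c i) ^ 2) 2 with h | h
    · rw [if_pos h, max_eq_right (by linarith), hdist i]
    · rw [if_neg (not_lt.mpr h), max_eq_left (by linarith)]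
      norm_num
  rw [hsum]
  rcases Finset.eq_empty_or_nonempty S with he | hne
  · simp [he]
  -- separation on S
  have hpair : ∀ i ∈ S, ∀ j ∈ S, i ≠ j → (4:ℝ) ≤ ‖a i - a j‖ ^ 2 := by
    intro i _ j _ hij
    have h1 : ‖a i - a j‖ = dist (c i) (c j) := by
      rw [dist_eq_norm]; congr 1; simp [ha]
    have := hsep i j hij
    nlinarith [h1 ▸ this]
  set m : ℝ := (S.card : ℝ) with hmdef
  have hm1 : (1:ℝ) ≤ m := by
    have := Finset.card_pos.mpr hne
    rw [hmdef]
    exact_mod_cast this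
  -- lower bound on double sum
  have hlow : 4 * (m * (m - 1)) ≤ ∑ i ∈ S, ∑ j ∈ S, ‖a i - a j‖ ^ 2 := by
    have : ∀ i ∈ S, 4 * (m - 1) ≤ ∑ j ∈ S, ‖a i - a j‖ ^ 2 := by
      intro i hi
      have h1 : ∑ j ∈ S.erase i, (4:ℝ) ≤ ∑ j ∈ S.erase i, ‖a i - a j‖ ^ 2 := by
        apply Finset.sum_le_sum
        intro j hj
        exact hpair i hi j (Finset.mem_of_mem_erase hj) (Ne.symm (Finset.ne_of_mem_erase hj))
      have h2 : ∑ j ∈ S.erase i, ‖a i - a j‖ ^ 2 ≤ ∑ j ∈ S, ‖a i - a j‖ ^ 2 := by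
        apply Finset.sum_le_sum_of_subset_of_nonneg (Finset.erase_subset i S)
        intro j _ _; positivity
      have hcard : (S.erase i).card = S.card - 1 := Finset.card_erase_of_mem hi
      have h3 : ∑ j ∈ S.erase i, (4:ℝ) = 4 * (m - 1) := by
        rw [Finset.sum_const, hcard]
        have : ((S.card - 1 : ℕ) : ℝ) = m - 1 := by
          have := Finset.card_pos.mpr hne
          push_cast [Nat.cast_sub this]
          ring
        rw [nsmul_eq_mul, this]; ring
      linarith
    calc 4 * (m * (m - 1)) = ∑ i ∈ S, 4 * (m - 1) := by
          rw [Finset.sum_const, nsmul_eq_mul]; ring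
      _ ≤ _ := Finset.sum_le_sum this
  -- upper bound on double sum
  have hup : ∑ i ∈ S, ∑ j ∈ S, ‖a i - a j‖ ^ 2
      ≤ 2 * m * ∑ i ∈ S, ‖a i‖ ^ 2 := by
    have hexp : ∑ i ∈ S, ∑ j ∈ S, ‖a i - a j‖ ^ 2
        = 2 * m * (∑ i ∈ S, ‖a i‖ ^ 2) - 2 * ‖∑ i ∈ S, a i‖ ^ 2 := by
      have h1 : ∀ i ∈ S, ∀ j ∈ S, ‖a i - a j‖ ^ 2
          = ‖a i‖ ^ 2 - 2 * ⟪a i, a j⟫ + ‖a j‖ ^ 2 := fun i _ j _ => by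
        rw [norm_sub_sq_real]
      rw [Finset.sum_congr rfl (fun i hi => Finset.sum_congr rfl (h1 i hi))]
      have hinner : ∑ i ∈ S, ∑ j ∈ S, ⟪a i, a j⟫ = ‖∑ i ∈ S, a i‖ ^ 2 := by
        rw [← real_inner_self_eq_norm_sq, sum_inner]
        exact Finset.sum_congr rfl fun i _ => by rw [inner_sum]
      simp only [Finset.sum_add_distrib, Finset.sum_sub_distrib, Finset.sum_const,
        nsmul_eq_mul, Finset.mul_sum]
      have e1 : ∑ i ∈ S, ∑ j ∈ S, 2 * (⟪a i, a j⟫ : ℝ)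
          = 2 * ∑ i ∈ S, ∑ j ∈ S, (⟪a i, a j⟫ : ℝ) := by
        rw [Finset.mul_sum]
        exact Finset.sum_congr rfl fun i _ => (Finset.mul_sum _ _ _).symm
      have e2 : ∑ i ∈ S, 2 * m * ‖a i‖ ^ 2
          = ∑ i ∈ S, m * ‖a i‖ ^ 2 + ∑ i ∈ S, m * ‖a i‖ ^ 2 := by
        rw [← Finset.sum_add_distrib]
        exact Finset.sum_congr rfl fun i _ => by ring
      rw [e1, hinner, ← hmdef]
      linarith [e2]
    have : (0:ℝ) ≤ ‖∑ i ∈ S, a i‖ ^ 2 := by positivity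
    linarith [hexp]
  have hkey : 2 * (m - 1) ≤ ∑ i ∈ S, ‖a i‖ ^ 2 := by
    have hm0 : 0 < m := by linarith
    nlinarith [hlow, hup]
  have : ∑ i ∈ S, (2 - ‖a i‖ ^ 2) / 2 = m - (∑ i ∈ S, ‖a i‖ ^ 2) / 2 := by
    have e : ∀ i ∈ S, (2 - ‖a i‖ ^ 2) / 2 = 1 - ‖a i‖ ^ 2 / 2 := fun i _ => by ring
    rw [Finset.sum_congr rfl e, Finset.sum_sub_distrib, Finset.sum_const, nsmul_eq_mul,
      mul_one, ← Finset.sum_div, ← hmdef]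
  rw [this]
  linarith
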